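/- Let B: V×V → ℂ be a bounded sesquilinear form on a Hilbert space V with boundedness constant γ, and suppose for each F in the dual V' the adjoint problem B(ξ, z_F) (conjugated) = ⟨F, ξ⟩ for all ξ ∈ V has a solution z_F. If u − u_M satisfies the Galerkin orthogonality B(u − u_M, v_M) = 0 for all v_M in a subspace V_M, then for any Hilbert space H ⊇ V with dual pairing realized through H, ‖u − u_M‖_H ≤ γ ‖u − u_M‖_V · sup_{F ∈ H, F ≠ 0} (1/‖F‖_H) inf_{v_M ∈ V_M} ‖z_F − v_M‖_V. -/

import Mathlib

/-- Abstract Aubin–Nitsche duality estimate: if `B` is a bounded sesquilinear form with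
constant `γ`, each `F ∈ H` has an adjoint solution `z F` with
`conj B(ξ, z F) = ⟪F, ιξ⟫_H` for all `ξ`, `u − u_M` is Galerkin-orthogonal to `V_M ∋ u_M`,
and `s` bounds the normalized best-approximation error of every adjoint solution in `V_M`,
then `‖ι(u − u_M)‖_H ≤ γ ‖u − u_M‖_V · s`. -/
theorem stmt10 {V H : Type*} [NormedAddCommGroup V] [InnerProductSpace ℂ V] [CompleteSpace V]
    [NormedAddCommGroup H] [InnerProductSpace ℂ H] [CompleteSpace H]
    (ι : V →L[ℂ] H) (B : V → V → ℂ) (gam : ℝ) (hgam : 0 < gam)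
    (hadd : ∀ w v v' : V, B w (v - v') = B w v - B w v')
    (hbound : ∀ w v : V, ‖B w v‖ ≤ gam * ‖w‖ * ‖v‖)
    (z : H → V)
    (hz : ∀ (F : H) (ξ : V), (starRingEnd ℂ) (B ξ (z F)) = (inner ℂ F (ι ξ) : ℂ))
    (VM : Submodule ℂ V) (u uM : V) (huM : uM ∈ VM)
    (horth : ∀ vM ∈ VM, B (u - uM) vM = 0)
    (s : ℝ) (hs : 0 ≤ s)
    (happrox : ∀ F : H, ∃ vM ∈ VM, ‖z F - vM‖ ≤ s * ‖F‖) :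
    ‖ι (u - uM)‖ ≤ gam * ‖u - uM‖ * s := by
  set F := ι (u - uM) with hF
  by_cases h0 : F = 0
  · rw [show F = 0 from h0, norm_zero]
    positivity
  · obtain ⟨vM, hvM, hle⟩ := happrox F
    have key : ‖F‖ ^ 2 ≤ gam * ‖u - uM‖ * (s * ‖F‖) := by
      have h1 : (‖F‖ : ℝ) ^ 2 = ‖(inner ℂ F F : ℂ)‖ := by
        rw [inner_self_eq_norm_sq_to_K]; simp [sq_abs]
      have h2 : (inner ℂ F (ι (u - uM)) : ℂ) = (starRingEnd ℂ) (B (u - uM) (z F)) := (hz F _).symm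
      have h3 : B (u - uM) (z F) = B (u - uM) (z F - vM) := by
        rw [hadd, horth vM hvM, sub_zero]
      calc ‖F‖ ^ 2 = ‖(inner ℂ F F : ℂ)‖ := h1
        _ = ‖B (u - uM) (z F - vM)‖ := by rw [show (inner ℂ F F : ℂ) = inner ℂ F (ι (u - uM)) from rfl, h2, h3, RingHomIsometric.norm_map]
        _ ≤ gam * ‖u - uM‖ * ‖z F - vM‖ := hbound _ _
        _ ≤ gam * ‖u - uM‖ * (s * ‖F‖) := by
            apply mul_le_mul_of_nonneg_left hle; positivity
    have hFpos : 0 < ‖F‖ := norm_pos_iff.mpr h0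
    nlinarith [key]
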